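/- Let I ≥ 2 be an integer, c > 0, and ω_i, μ_i, M_i > 0 for i = 2, ..., I. Let 0 = z_1 < z_2 < ... < z_I and let p : [0, z_I] → ℝ be continuous with p(z_I) = 0, such that on each interval [z_{i−1}, z_i] for i = 2, ..., I the function p is affine with slope −c/μ_i, and ∫_{z_{i−1}}^{z_i} p(z) dz = ω_i M_i for i = 2, ..., I. Then p(z_i) = sqrt(2 c Σ_{j=i+1}^I (ω_j/μ_j) M_j) for every i = 1, ..., I−1; in particular p(0) = sqrt(2 c Σ_{j=2}^I (ω_j/μ_j) M_j). -/

import Mathlib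

open Set

lemma integ_aff (a b C k : ℝ) :
    ∫ x in a..b, (C + k * (b - x)) = C * (b - a) + k * (b - a) ^ 2 / 2 := by
  have h : (fun x : ℝ => C + k * (b - x)) = fun x => (C + k * b) - k * x := by
    funext x; ring
  have hg : IntervalIntegrable (fun x : ℝ => k * x) MeasureTheory.volume a b :=
    (continuous_const.mul continuous_id).intervalIntegrable a b
  rw [h, intervalIntegral.integral_sub intervalIntegrable_const hg,
    intervalIntegral.integral_const, intervalIntegral.integral_const_mul,
    integral_id, smul_eq_mul]
  ring

/-- For the piecewise-affine travelling-wave pressure ahead of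
the proliferating region — continuous, with slope `−c/μ_i` on `[z_{i−1}, z_i]`,
vanishing at the front edge `z_I`, and carrying mass `ω_i M_i` on the `i`-th
segment — the interface values are
`p(z_i) = sqrt(2 c Σ_{j=i+1}^I (ω_j/μ_j) M_j)`. -/
theorem stmt9
    (I : ℕ) (hI : 2 ≤ I)
    (c : ℝ) (hc : 0 < c)
    (ω μ M : ℕ → ℝ)
    (hω : ∀ i, 2 ≤ i → i ≤ I → 0 < ω i)
    (hμ : ∀ i, 2 ≤ i → i ≤ I → 0 < μ i)
    (hM : ∀ i, 2 ≤ i → i ≤ I → 0 < M i)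
    (z : ℕ → ℝ) (hz1 : z 1 = 0)
    (hzmono : ∀ i, 1 ≤ i → i < I → z i < z (i + 1))
    (p : ℝ → ℝ)
    (hpc : ContinuousOn p (Icc 0 (z I)))
    (hpzI : p (z I) = 0)
    (haff : ∀ i, 2 ≤ i → i ≤ I →
      ∀ x ∈ Icc (z (i - 1)) (z i), p x = p (z i) + c / μ i * (z i - x))
    (hmass : ∀ i, 2 ≤ i → i ≤ I →
      ∫ x in (z (i - 1))..(z i), p x = ω i * M i) :
    (∀ i, 1 ≤ i → i ≤ I - 1 →
      p (z i) = Real.sqrt (2 * c * ∑ j ∈ Finset.Icc (i + 1) I, ω j / μ j * M j)) ∧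
    p 0 = Real.sqrt (2 * c * ∑ j ∈ Finset.Icc 2 I, ω j / μ j * M j) := by
  -- step lemma: for 2 ≤ i ≤ I, (p (z (i-1)))^2 = (p (z i))^2 + 2*c*(ω i / μ i * M i)
  -- and p (z (i-1)) = p (z i) + c/μ i * (z i - z (i-1))
  have step : ∀ i, 2 ≤ i → i ≤ I →
      p (z (i - 1)) = p (z i) + c / μ i * (z i - z (i - 1)) ∧
      (p (z (i - 1))) ^ 2 = (p (z i)) ^ 2 + 2 * c * (ω i / μ i * M i) := by
    intro i h2 hiI
    have hμi := hμ i h2 hiI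
    have hlt : z (i - 1) < z i := by
      have := hzmono (i - 1) (by omega) (by omega)
      rwa [Nat.sub_add_cancel (by omega)] at this
    have hmem : z (i - 1) ∈ Icc (z (i - 1)) (z i) := ⟨le_refl _, hlt.le⟩
    have h1 := haff i h2 hiI (z (i - 1)) hmem
    refine ⟨h1, ?_⟩
    -- compute the integral
    have hcong : ∫ x in (z (i - 1))..(z i), p x
        = ∫ x in (z (i - 1))..(z i), (p (z i) + c / μ i * (z i - x)) := by
      apply intervalIntegral.integral_congr
      intro x hx
      rw [uIcc_of_le hlt.le] at hx
      exact haff i h2 hiI x hx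
    have hint : p (z i) * (z i - z (i - 1)) + c / μ i * (z i - z (i - 1)) ^ 2 / 2
        = ω i * M i := by
      rw [← hmass i h2 hiI, hcong, integ_aff]
    have hk : c / μ i ≠ 0 := ne_of_gt (div_pos hc hμi)
    have : (p (z i) + c / μ i * (z i - z (i - 1))) ^ 2
        = (p (z i)) ^ 2 + 2 * (c / μ i) * (ω i * M i) := by
      rw [← hint]; ring
    rw [h1, this]
    field_simp
  -- nonnegativity and squared identity by downward induction
  have key : ∀ k, k ≤ I - 1 →
      0 ≤ p (z (I - k)) ∧
      (p (z (I - k))) ^ 2 = 2 * c * ∑ j ∈ Finset.Icc (I - k + 1) I, ω j / μ j * M j := by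
    intro k
    induction k with
    | zero =>
      intro _
      simp only [Nat.sub_zero]
      rw [hpzI]
      rw [Finset.Icc_eq_empty (by omega)]
      simp
    | succ k ih =>
      intro hk
      obtain ⟨ihn, ihs⟩ := ih (by omega)
      set i := I - (k + 1) with hi
      have hik : I - k = i + 1 := by omega
      have h2 : 2 ≤ i + 1 := by omega
      have hiI : i + 1 ≤ I := by omega
      have hstep := step (i + 1) h2 hiI
      simp only [Nat.add_sub_cancel] at hstep
      obtain ⟨he, hsq⟩ := hstep
      rw [hik] at ihn ihs
      constructor
      · rw [he]
        have hlt := hzmono i (by omega) (by omega)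
        have : 0 < c / μ (i + 1) * (z (i + 1) - z i) :=
          mul_pos (div_pos hc (hμ _ h2 hiI)) (by linarith)
        linarith
      · rw [hsq, ihs]
        have hins : Finset.Icc (i + 1) I = insert (i + 1) (Finset.Icc (i + 2) I) := by
          ext j
          simp only [Finset.mem_Icc, Finset.mem_insert]
          omega
        rw [hins, Finset.sum_insert (by simp [Finset.mem_Icc])]
        ring
  have main : ∀ i, 1 ≤ i → i ≤ I - 1 →
      p (z i) = Real.sqrt (2 * c * ∑ j ∈ Finset.Icc (i + 1) I, ω j / μ j * M j) := by
    intro i h1 h2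
    have hk := key (I - i) (by omega)
    rw [show I - (I - i) = i from by omega] at hk
    rw [← hk.2, Real.sqrt_sq hk.1]
  refine ⟨main, ?_⟩
  rw [← hz1]
  exact main 1 le_rfl (by omega)
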